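/- Let S ⊆ B(H)_sa be an invex set with respect to η : S × S → B(H)_sa satisfying condition C, let f : ℝ → ℝ be continuous, let A, B ∈ S and V := A + η(B,A). If f is operator preinvex with respect to η on the η-path P_AV, then for every x ∈ H with ‖x‖ = 1 the function φ_{x,A,B} : [0,1] → ℝ defined by φ_{x,A,B}(t) := ⟨f(A + tη(B,A))x, x⟩ is convex on [0,1]. -/

import Mathlib

open scoped InnerProductSpace

set_option maxHeartbeats 1000000 in
/-- If `f` is operator preinvex with respect to `η` on the η-path `P_AV`,
then for every unit vector `x` the function `t ↦ ⟨f(A + tη(B,A))x, x⟩` is convex on `[0,1]`. -/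
theorem operator_preinvex_implies_phi_convex
    {H : Type*} [NormedAddCommGroup H] [InnerProductSpace ℂ H] [CompleteSpace H]
    (S : Set (H →L[ℂ] H)) (hSsa : ∀ A ∈ S, IsSelfAdjoint A)
    (η : (H →L[ℂ] H) → (H →L[ℂ] H) → (H →L[ℂ] H))
    (hinvex : ∀ A ∈ S, ∀ B ∈ S, ∀ t ∈ Set.Icc (0:ℝ) 1, A + t • η B A ∈ S)
    (hC1 : ∀ A ∈ S, ∀ B ∈ S, ∀ t ∈ Set.Icc (0:ℝ) 1,
      η A (A + t • η B A) = (-t) • η B A)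
    (hC2 : ∀ A ∈ S, ∀ B ∈ S, ∀ t ∈ Set.Icc (0:ℝ) 1,
      η B (A + t • η B A) = (1 - t) • η B A)
    (f : ℝ → ℝ) (hf : Continuous f)
    (A : H →L[ℂ] H) (hA : A ∈ S) (B : H →L[ℂ] H) (hB : B ∈ S)
    -- f is operator preinvex with respect to η on the η-path P_AV,
    -- where P_AV = {A + t • η B A : t ∈ [0,1]} and V = A + η B A :
    (hpreinvex : ∀ C₁ ∈ {C | ∃ t ∈ Set.Icc (0:ℝ) 1, C = A + t • η B A},
      ∀ C₂ ∈ {C | ∃ t ∈ Set.Icc (0:ℝ) 1, C = A + t • η B A},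
      ∀ lam ∈ Set.Icc (0:ℝ) 1,
        cfc f (C₁ + lam • η C₂ C₁) ≤ (1 - lam) • cfc f C₁ + lam • cfc f C₂) :
    ∀ x : H, ‖x‖ = 1 →
      ConvexOn ℝ (Set.Icc (0:ℝ) 1)
        (fun t : ℝ => RCLike.re ⟪(cfc f (A + t • η B A)) x, x⟫_ℂ) := by
  intro x hx
  set E := η B A with hE
  -- key operator inequality for t₁ ≤ t₂
  have key : ∀ t₁ ∈ Set.Icc (0:ℝ) 1, ∀ t₂ ∈ Set.Icc (0:ℝ) 1, t₁ ≤ t₂ →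
      ∀ a b : ℝ, 0 ≤ a → 0 ≤ b → a + b = 1 →
      cfc f (A + (a * t₁ + b * t₂) • E) ≤
        a • cfc f (A + t₁ • E) + b • cfc f (A + t₂ • E) := by
    intro t₁ ht₁ t₂ ht₂ hle a b ha hb hab
    rcases eq_or_lt_of_le hle with heq | hlt
    · subst heq
      have h1 : a * t₁ + b * t₁ = t₁ := by rw [← add_mul, hab, one_mul]
      rw [h1, ← add_smul, hab, one_smul]
    · have ht2pos : 0 < t₂ := lt_of_le_of_lt ht₁.1 hlt
      have hw : A + t₂ • E ∈ S := hinvex A hA B hB t₂ ht₂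
      have h1 : η A (A + t₂ • E) = (-t₂) • E := hC1 A hA B hB t₂ ht₂
      have hetapath : η (A + t₂ • E) (A + t₁ • E) = (t₂ - t₁) • E := by
        set r := (t₂ - t₁) / t₂ with hr
        have hr01 : r ∈ Set.Icc (0:ℝ) 1 :=
          ⟨div_nonneg (by linarith) ht2pos.le,
           (div_le_one ht2pos).mpr (by linarith [ht₁.1])⟩
        have h2 := hC1 (A + t₂ • E) hw A hA r hr01
        have hrt : r * (-t₂) = t₁ - t₂ := by
          rw [hr, mul_neg, div_mul_cancel₀ _ ht2pos.ne']; ring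
        have hpt : (A + t₂ • E) + r • η A (A + t₂ • E) = A + t₁ • E := by
          rw [h1, smul_smul, hrt]; module
        rw [hpt, h1, smul_smul] at h2
        rw [h2]
        congr 1
        rw [neg_mul_neg, hr, div_mul_cancel₀ _ ht2pos.ne']
      have hmem₁ : A + t₁ • E ∈ {C | ∃ t ∈ Set.Icc (0:ℝ) 1, C = A + t • η B A} :=
        ⟨t₁, ht₁, rfl⟩
      have hmem₂ : A + t₂ • E ∈ {C | ∃ t ∈ Set.Icc (0:ℝ) 1, C = A + t • η B A} :=
        ⟨t₂, ht₂, rfl⟩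
      have hb1 : b ∈ Set.Icc (0:ℝ) 1 := ⟨hb, by linarith⟩
      have h := hpreinvex _ hmem₁ _ hmem₂ b hb1
      rw [hetapath] at h
      have harg : (A + t₁ • E) + b • (t₂ - t₁) • E = A + (a * t₁ + b * t₂) • E := by
        have ha' : a = 1 - b := by linarith
        have : t₁ + b * (t₂ - t₁) = a * t₁ + b * t₂ := by rw [ha']; ring
        rw [smul_smul, ← this]; module
      have hcoef : (1 : ℝ) - b = a := by linarith
      rw [harg, hcoef] at h
      exact h
  -- operator inequality implies inequality of quadratic forms
  have hre : ∀ T U : H →L[ℂ] H, T ≤ U →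
      RCLike.re ⟪T x, x⟫_ℂ ≤ RCLike.re ⟪U x, x⟫_ℂ := by
    intro T U hTU
    have h := ((ContinuousLinearMap.le_def T U).mp hTU).inner_nonneg_left x
    rw [ContinuousLinearMap.sub_apply, inner_sub_left] at h
    have h := (RCLike.nonneg_iff.mp h).1
    rw [map_sub] at h
    linarith
  have hlin : ∀ (a b : ℝ) (T U : H →L[ℂ] H),
      RCLike.re ⟪(a • T + b • U) x, x⟫_ℂ =
        a * RCLike.re ⟪T x, x⟫_ℂ + b * RCLike.re ⟪U x, x⟫_ℂ := by
    intro a b T U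
    have hs : ∀ (r : ℝ) (v : H), (⟪r • v, x⟫_ℂ).re = r * (⟪v, x⟫_ℂ).re := by
      intro r v
      rw [← algebraMap_smul ℂ r v, Complex.coe_algebraMap, inner_smul_left]
      simp [Complex.conj_ofReal, Complex.mul_re]
    simp [ContinuousLinearMap.add_apply, ContinuousLinearMap.smul_apply,
      inner_add_left, hs]
  constructor
  · exact convex_Icc 0 1
  · intro t₁ ht₁ t₂ ht₂ a b ha hb hab
    simp only [smul_eq_mul]
    rcases le_total t₁ t₂ with hle | hle
    · have h := key t₁ ht₁ t₂ ht₂ hle a b ha hb hab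
      calc RCLike.re ⟪(cfc f (A + (a * t₁ + b * t₂) • E)) x, x⟫_ℂ
          ≤ RCLike.re ⟪(a • cfc f (A + t₁ • E) + b • cfc f (A + t₂ • E)) x, x⟫_ℂ :=
            hre _ _ h
        _ = _ := hlin a b _ _
    · have h := key t₂ ht₂ t₁ ht₁ hle b a hb ha (by linarith)
      have hcomm : b * t₂ + a * t₁ = a * t₁ + b * t₂ := by ring
      rw [hcomm] at h
      calc RCLike.re ⟪(cfc f (A + (a * t₁ + b * t₂) • E)) x, x⟫_ℂ
          ≤ RCLike.re ⟪(b • cfc f (A + t₂ • E) + a • cfc f (A + t₁ • E)) x, x⟫_ℂ :=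
            hre _ _ h
        _ = b * RCLike.re ⟪(cfc f (A + t₂ • E)) x, x⟫_ℂ
            + a * RCLike.re ⟪(cfc f (A + t₁ • E)) x, x⟫_ℂ := hlin b a _ _
        _ = _ := by ring
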